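/- If D : S → M is a Jordan (δ,f)-derivation on a 2-torsion-free bimodule M, then D(xyx) = D(x)yx + f(x)δ(y)x + f(x)yδ(x) for all x, y ∈ S. -/
import Mathlib


open MulOpposite

/-- For a Jordan `(δ,f)`-derivation `D` on a `2`-torsion-free bimodule `M`,
`D(xyx) = D(x)yx + f(x)δ(y)x + f(x)yδ(x)`. -/
theorem jordan_derivation_xyx
    {R S M : Type*} [CommRing R] [Ring S] [Algebra R S]
    [AddCommGroup M] [Module S M] [Module Sᵐᵒᵖ M] [SMulCommClass S Sᵐᵒᵖ M]
    (htf : ∀ m : M, 2 • m = 0 → m = 0)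
    (δ : S → S) (hδadd : ∀ a b : S, δ (a + b) = δ a + δ b)
    (hδmul : ∀ a b : S, δ (a * b) = δ a * b + a * δ b)
    (f : S → M) (hfadd : ∀ a b : S, f (a + b) = f a + f b)
    (hfleft : ∀ a x : S, f (a * x) = a • f x)
    (hfright : ∀ x a : S, f (x * a) = op a • f x)
    (D : S → M) (hDadd : ∀ a b : S, D (a + b) = D a + D b)
    (hJordan : ∀ x : S, D (x * x) = op x • D x + op (δ x) • f x)
    (hrule : ∀ x y : S, D (x * y + y * x) =
      (op y • D x + y • D x) + (op (δ y) • f x + δ y • f x)) :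
    ∀ x y : S, D (x * y * x) =
      op x • (op y • D x) + op x • (op (δ y) • f x) + op (δ x) • (op y • f x) := by
  intro x y
  -- shuttle relations for the bimodule map f
  have hSyx : y • f x = op x • f y := (hfleft y x).symm.trans (hfright y x)
  have hSxy : x • f y = op y • f x := (hfleft x y).symm.trans (hfright x y)
  have hSxx : x • f x = op x • f x := (hfleft x x).symm.trans (hfright x x)
  -- P(x) : left and right actions agree on D x, f x combination
  have hP : x • D x + δ x • f x = op x • D x + op (δ x) • f x := by
    have h := (hrule x x).symm
    rw [hDadd, hJordan] at h
    rw [← sub_eq_zero] at h ⊢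
    rw [← h]; abel
  -- K1 : from linearizing hJordan and comparing with hrule x y
  have hK1 : op x • D y + op (δ x) • f y = y • D x + δ y • f x := by
    have h := (hJordan (x + y)).symm
    rw [show (x + y) * (x + y) = x * x + y * y + (x * y + y * x) from by noncomm_ring] at h
    rw [hDadd (x * x + y * y) (x * y + y * x), hDadd (x * x) (y * y), hDadd x y,
      hJordan x, hJordan y, hrule x y, hδadd x y, hfadd x y] at h
    simp only [op_add, add_smul, smul_add] at h
    rw [← sub_eq_zero] at h ⊢
    rw [← h]; abel
  -- K2 : from linearizing hJordan and comparing with hrule y x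
  have hK2 : op y • D x + op (δ y) • f x = x • D y + δ x • f y := by
    have h := (hJordan (x + y)).symm
    rw [show (x + y) * (x + y) = x * x + y * y + (y * x + x * y) from by noncomm_ring] at h
    rw [hDadd (x * x + y * y) (y * x + x * y), hDadd (x * x) (y * y), hDadd x y,
      hJordan x, hJordan y, hrule y x, hδadd x y, hfadd x y] at h
    simp only [op_add, add_smul, smul_add] at h
    rw [← sub_eq_zero] at h ⊢
    rw [← h]; abel
  -- the three main instances of hrule
  have h1 : D (x * x * y) + D (x * y * x) =
      op y • (op x • D x) + x • (y • D x) + op y • (op (δ x) • f x)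
        + op (δ y) • (op x • f x) + δ x • (y • f x) + x • (δ y • f x) := by
    have h := hrule x (x * y)
    rw [← mul_assoc x x y, hDadd (x * x * y) (x * y * x), hδmul x y] at h
    simp only [op_mul, op_add, mul_smul, add_smul] at h
    rw [← sub_eq_zero] at h ⊢
    rw [← h]; abel
  have h2 : D (x * y * x) + D (y * (x * x)) =
      op x • (op y • D x) + y • (x • D x) + op x • (op (δ y) • f x)
        + op (δ x) • (op y • f x) + δ y • (x • f x) + y • (δ x • f x) := by
    have h := hrule x (y * x)
    rw [← mul_assoc x y x, mul_assoc y x x, hDadd (x * y * x) (y * (x * x)), hδmul y x] at h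
    simp only [op_mul, op_add, mul_smul, add_smul] at h
    rw [← sub_eq_zero] at h ⊢
    rw [← h]; abel
  have h3 : D (x * x * y) + D (y * (x * x)) =
      op y • (op x • D x) + op y • (op (δ x) • f x) + op x • (y • D x)
        + op (δ x) • (y • f x) + op (δ y) • (x • f x) + δ y • (x • f x) := by
    have h := hrule (x * x) y
    rw [hDadd (x * x * y) (y * (x * x)), hJordan x, hfleft x x] at h
    simp only [smul_add] at h
    rw [smul_comm y (op x) (D x), smul_comm y (op (δ x)) (f x)] at h
    rw [← sub_eq_zero] at h ⊢
    rw [← h]; abel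
  -- multiplied versions of the auxiliary identities
  have h4 : y • (x • D x) + y • (δ x • f x) = op x • (y • D x) + op (δ x) • (y • f x) := by
    rw [← smul_add, hP, smul_add, smul_comm y (op x) (D x), smul_comm y (op (δ x)) (f x)]
  have h5 : op x • (x • D y) + op (δ x) • (x • f y) = x • (y • D x) + x • (δ y • f x) := by
    rw [← smul_comm x (op x) (D y), ← smul_comm x (op (δ x)) (f y), ← smul_add, hK1, smul_add]
  have h6 : op x • (op y • D x) + op x • (op (δ y) • f x)
      = op x • (x • D y) + op x • (δ x • f y) := by
    rw [← smul_add, hK2, smul_add]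
  have h7 : δ x • (y • f x) = op x • (δ x • f y) := by
    rw [hSyx, smul_comm (δ x) (op x) (f y)]
  have h8 : op (δ x) • (x • f y) = op (δ x) • (op y • f x) := by rw [hSxy]
  have h9 : op (δ y) • (x • f x) = op (δ y) • (op x • f x) := by rw [hSxx]
  -- combine everything; divide by 2 using torsion-freeness
  rw [← sub_eq_zero]
  refine htf _ ?_
  calc 2 • (D (x * y * x) -
        (op x • (op y • D x) + op x • (op (δ y) • f x) + op (δ x) • (op y • f x)))
      = ((D (x * x * y) + D (x * y * x)) -
          (op y • (op x • D x) + x • (y • D x) + op y • (op (δ x) • f x)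
            + op (δ y) • (op x • f x) + δ x • (y • f x) + x • (δ y • f x)))
        + ((D (x * y * x) + D (y * (x * x))) -
          (op x • (op y • D x) + y • (x • D x) + op x • (op (δ y) • f x)
            + op (δ x) • (op y • f x) + δ y • (x • f x) + y • (δ x • f x)))
        - ((D (x * x * y) + D (y * (x * x))) -
          (op y • (op x • D x) + op y • (op (δ x) • f x) + op x • (y • D x)
            + op (δ x) • (y • f x) + op (δ y) • (x • f x) + δ y • (x • f x)))
        + ((y • (x • D x) + y • (δ x • f x)) - (op x • (y • D x) + op (δ x) • (y • f x)))
        - ((op x • (x • D y) + op (δ x) • (x • f y)) - (x • (y • D x) + x • (δ y • f x)))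
        - ((op x • (op y • D x) + op x • (op (δ y) • f x))
            - (op x • (x • D y) + op x • (δ x • f y)))
        + ((δ x • (y • f x)) - (op x • (δ x • f y)))
        + ((op (δ x) • (x • f y)) - (op (δ x) • (op y • f x)))
        - ((op (δ y) • (x • f x)) - (op (δ y) • (op x • f x))) := by abel
    _ = 0 := by rw [h1, h2, h3, h4, h5, h6, h7, h8, h9]; abel
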